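/- arXiv:2001.03955 — 3 statements merged into one kernel-verified Lean document; each statement's English description precedes it below -/
import Mathlib

section
/- Under any joint distribution on (Y,X,T) satisfying the Markov chain Y—X—T (i.e., p(y,x,t)=p_{XY}(x,y)·p_{T|X}(t|x)), the expected IB distortion equals the information loss about Y: E[d_IB(X,T)] := Σ_{x,t} p_{XT}(x,t)·KL(p_{Y|X}(·|x) ‖ p_{Y|T}(·|t)) = I(X;Y) − I(Y;T). Equivalently, E[d_IB(X,T)] = H(Y|T) − H(Y|X). -/
open Finset

noncomputable section

/-- `p` is a probability distribution on a finite set. -/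
def IsDist {A : Type*} [Fintype A] (p : A → ℝ) : Prop :=
  (∀ a, 0 ≤ p a) ∧ ∑ a, p a = 1

/-- `p` is a joint probability distribution on a product of finite sets (curried form). -/
def IsJoint {A B : Type*} [Fintype A] [Fintype B] (p : A → B → ℝ) : Prop :=
  (∀ a b, 0 ≤ p a b) ∧ ∑ a, ∑ b, p a b = 1

/-- `w` is a conditional probability distribution (a row-stochastic kernel). -/
def IsCond {A B : Type*} [Fintype A] [Fintype B] (w : A → B → ℝ) : Prop :=
  (∀ a b, 0 ≤ w a b) ∧ ∀ a, ∑ b, w a b = 1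

/-- Mutual information (natural logarithm) of a joint distribution given in curried form. -/
def mutualInfo {A B : Type*} [Fintype A] [Fintype B] (p : A → B → ℝ) : ℝ :=
  ∑ a, ∑ b, p a b * Real.log (p a b / ((∑ b', p a b') * (∑ a', p a' b)))

/-- Kullback–Leibler divergence (natural logarithm) between two distributions. -/
def klDiv {A : Type*} [Fintype A] (p q : A → ℝ) : ℝ :=
  ∑ a, p a * Real.log (p a / q a)

/-- Shannon entropy (natural logarithm). -/
def entropy {A : Type*} [Fintype A] (p : A → ℝ) : ℝ :=
  -∑ a, p a * Real.log (p a)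

variable {𝒳 𝒴 : Type*} [Fintype 𝒳] [Fintype 𝒴]

/-- Marginal on the first component of a joint distribution. -/
def margX (p : 𝒳 → 𝒴 → ℝ) (x : 𝒳) : ℝ := ∑ y, p x y

/-- Marginal on the second component of a joint distribution. -/
def margY (p : 𝒳 → 𝒴 → ℝ) (y : 𝒴) : ℝ := ∑ x, p x y

/-- Marginal distribution of the representation `U` induced by `p_{XY}` and `p_{U|X} = w`. -/
def pU {U : Type*} [Fintype U] (p : 𝒳 → 𝒴 → ℝ) (w : 𝒳 → U → ℝ) (u : U) : ℝ :=
  ∑ x, margX p x * w x u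

/-- Joint distribution of `(Y, U)` induced by `p_{XY}` and `p_{U|X} = w`
(Markov chain `Y — X — U`). -/
def pYU {U : Type*} [Fintype U] (p : 𝒳 → 𝒴 → ℝ) (w : 𝒳 → U → ℝ) (y : 𝒴) (u : U) : ℝ :=
  ∑ x, p x y * w x u

/-- The IB distortion `d_IB(x, u) = KL(p_{Y|X}(·|x) ‖ p_{Y|U}(·|u))`. -/
def dIB {U : Type*} [Fintype U] (p : 𝒳 → 𝒴 → ℝ) (w : 𝒳 → U → ℝ) (x : 𝒳) (u : U) : ℝ :=
  klDiv (fun y => p x y / margX p x) (fun y => pYU p w y u / pU p w u)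

/-- Expected IB distortion `E[d_IB(X, U)]`. -/
def EdIB {U : Type*} [Fintype U] (p : 𝒳 → 𝒴 → ℝ) (w : 𝒳 → U → ℝ) : ℝ :=
  ∑ x, ∑ u, margX p x * w x u * dIB p w x u

/-- Mutual information `I(X; U)` under the Markov chain `Y — X — U`. -/
def IXU {U : Type*} [Fintype U] (p : 𝒳 → 𝒴 → ℝ) (w : 𝒳 → U → ℝ) : ℝ :=
  mutualInfo (fun x u => margX p x * w x u)

/-- Mutual information `I(Y; U)` under the Markov chain `Y — X — U`. -/
def IYU {U : Type*} [Fintype U] (p : 𝒳 → 𝒴 → ℝ) (w : 𝒳 → U → ℝ) : ℝ :=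
  mutualInfo (fun y u => pYU p w y u)

/-- Conditional entropy `H(Y|X)` under the joint distribution `p`. -/
def condEntropyYX (p : 𝒳 → 𝒴 → ℝ) : ℝ :=
  -∑ x, ∑ y, p x y * Real.log (p x y / margX p x)

/-- Conditional entropy `H(Y|U)` under the joint distribution induced by `p` and `w`. -/
def condEntropyYU {U : Type*} [Fintype U] (p : 𝒳 → 𝒴 → ℝ) (w : 𝒳 → U → ℝ) : ℝ :=
  -∑ y, ∑ u, pYU p w y u * Real.log (pYU p w y u / pU p w u)

private lemma sum_comm3 {α β γ : Type*} [Fintype α] [Fintype β] [Fintype γ] (f : α → β → γ → ℝ) :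
    ∑ a, ∑ b, ∑ c, f a b c = ∑ c, ∑ b, ∑ a, f a b c :=
  calc ∑ a, ∑ b, ∑ c, f a b c
      = ∑ a, ∑ c, ∑ b, f a b c := Finset.sum_congr rfl fun _ _ => Finset.sum_comm
    _ = ∑ c, ∑ a, ∑ b, f a b c := Finset.sum_comm
    _ = ∑ c, ∑ b, ∑ a, f a b c := Finset.sum_congr rfl fun _ _ => Finset.sum_comm

private lemma split_log (a b c : ℝ) (ha : 0 ≤ a) (hb : a ≠ 0 → 0 < b) (hc : a ≠ 0 → 0 < c) :
    a * Real.log (a / (b * c)) = a * Real.log (a / b) - a * Real.log c := by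
  rcases eq_or_lt_of_le ha with h | h
  · simp [← h]
  · have hb' := hb h.ne'
    have hc' := hc h.ne'
    rw [div_mul_eq_div_div, Real.log_div (by positivity) hc'.ne']
    ring

/-- Under any joint distribution on `(Y, X, T)` satisfying the Markov chain `Y — X — T`
(i.e. `p(y,x,t) = p_{XY}(x,y) · p_{T|X}(t|x)`), the expected IB distortion equals the
information loss about `Y`:
`E[d_IB(X,T)] = Σ_{x,t} p_{XT}(x,t) · KL(p_{Y|X}(·|x) ‖ p_{Y|T}(·|t)) = I(X;Y) − I(Y;T)`.
Equivalently, `E[d_IB(X,T)] = H(Y|T) − H(Y|X)`. -/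
theorem expected_dIB_eq_info_loss
    {𝒳 𝒴 𝒯 : Type*} [Fintype 𝒳] [Fintype 𝒴] [Fintype 𝒯]
    (p : 𝒳 → 𝒴 → ℝ) (hp : IsJoint p) (hX : ∀ x, 0 < margX p x)
    (w : 𝒳 → 𝒯 → ℝ) (hw : IsCond w) :
    EdIB p w = mutualInfo p - IYU p w ∧
    EdIB p w = condEntropyYU p w - condEntropyYX p := by
  obtain ⟨hpnn, hpsum⟩ := hp
  obtain ⟨hwnn, hwsum⟩ := hw
  have hpYUnn : ∀ y u, (0:ℝ) ≤ pYU p w y u := fun y u =>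
    Finset.sum_nonneg fun x _ => mul_nonneg (hpnn x y) (hwnn x u)
  have hle_pYU : ∀ x y u, p x y * w x u ≤ pYU p w y u := fun x y u =>
    Finset.single_le_sum (fun x' _ => mul_nonneg (hpnn x' y) (hwnn x' u)) (Finset.mem_univ x)
  have hle_pU : ∀ x u, margX p x * w x u ≤ pU p w u := fun x u =>
    Finset.single_le_sum (fun x' _ => mul_nonneg (hX x').le (hwnn x' u)) (Finset.mem_univ x)
  have hmY : ∀ y, ∑ u, pYU p w y u = margY p y := by
    intro y
    unfold pYU margY
    rw [Finset.sum_comm]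
    refine Finset.sum_congr rfl fun x _ => ?_
    rw [← Finset.mul_sum, hwsum x, mul_one]
  have hpUeq : ∀ u, ∑ y, pYU p w y u = pU p w u := by
    intro u
    unfold pYU pU margX
    rw [Finset.sum_comm]
    refine Finset.sum_congr rfl fun x _ => ?_
    rw [← Finset.sum_mul]
  have hmYle : ∀ y u, pYU p w y u ≤ margY p y := by
    intro y u
    rw [← hmY y]
    exact Finset.single_le_sum (fun u' _ => hpYUnn y u') (Finset.mem_univ u)
  have hpUle : ∀ y u, pYU p w y u ≤ pU p w u := by
    intro y u
    rw [← hpUeq u]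
    exact Finset.single_le_sum (fun y' _ => hpYUnn y' u) (Finset.mem_univ y)
  have hmYle2 : ∀ x y, p x y ≤ margY p y := fun x y =>
    Finset.single_le_sum (fun x' _ => hpnn x' y) (Finset.mem_univ x)
  -- Second equality : EdIB = H(Y|U) - H(Y|X)
  have key2 : EdIB p w = condEntropyYU p w - condEntropyYX p := by
    have step : EdIB p w
        = ∑ x, ∑ u, ∑ y, (p x y * w x u * Real.log (p x y / margX p x)
            - p x y * w x u * Real.log (pYU p w y u / pU p w u)) := by
      unfold EdIB dIB klDiv
      refine Finset.sum_congr rfl fun x _ => Finset.sum_congr rfl fun u _ => ?_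
      rw [Finset.mul_sum]
      refine Finset.sum_congr rfl fun y _ => ?_
      by_cases h : p x y * w x u = 0
      · rcases mul_eq_zero.mp h with h' | h' <;> simp [h']
      · obtain ⟨hp0, hw0⟩ := mul_ne_zero_iff.mp h
        have hpxy : 0 < p x y := (hpnn x y).lt_of_ne' hp0
        have hwxu : 0 < w x u := (hwnn x u).lt_of_ne' hw0
        have hmx := hX x
        have hYU : 0 < pYU p w y u := lt_of_lt_of_le (by positivity) (hle_pYU x y u)
        have hU : 0 < pU p w u := lt_of_lt_of_le (by positivity) (hle_pU x u)
        rw [Real.log_div (by positivity) (by positivity)]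
        field_simp
    rw [step]
    have split : (∑ x, ∑ u, ∑ y, (p x y * w x u * Real.log (p x y / margX p x)
            - p x y * w x u * Real.log (pYU p w y u / pU p w u)))
        = (∑ x, ∑ u, ∑ y, p x y * w x u * Real.log (p x y / margX p x))
          - ∑ x, ∑ u, ∑ y, p x y * w x u * Real.log (pYU p w y u / pU p w u) := by
      rw [← Finset.sum_sub_distrib]
      refine Finset.sum_congr rfl fun x _ => ?_
      rw [← Finset.sum_sub_distrib]
      refine Finset.sum_congr rfl fun u _ => ?_
      rw [← Finset.sum_sub_distrib]
    rw [split]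
    have hS1 : (∑ x, ∑ u, ∑ y, p x y * w x u * Real.log (p x y / margX p x))
        = -condEntropyYX p := by
      unfold condEntropyYX
      rw [neg_neg]
      refine Finset.sum_congr rfl fun x _ => ?_
      rw [Finset.sum_comm]
      refine Finset.sum_congr rfl fun y _ => ?_
      have hr : ∀ u, p x y * w x u * Real.log (p x y / margX p x)
          = (p x y * Real.log (p x y / margX p x)) * w x u := fun u => by ring
      simp_rw [hr]
      rw [← Finset.mul_sum, hwsum x, mul_one]
    have hS2 : (∑ x, ∑ u, ∑ y, p x y * w x u * Real.log (pYU p w y u / pU p w u))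
        = -condEntropyYU p w := by
      unfold condEntropyYU
      rw [neg_neg, sum_comm3 (fun x u y => p x y * w x u * Real.log (pYU p w y u / pU p w u))]
      refine Finset.sum_congr rfl fun y _ => Finset.sum_congr rfl fun u _ => ?_
      rw [← Finset.sum_mul]
      rfl
    rw [hS1, hS2]
    ring
  -- I(X;Y) = -H(Y|X) - ∑ margY log margY
  have e1 : mutualInfo p = -condEntropyYX p - ∑ y, margY p y * Real.log (margY p y) := by
    unfold mutualInfo condEntropyYX
    rw [neg_neg]
    have hterm : ∀ x y, p x y * Real.log (p x y / ((∑ y', p x y') * (∑ x', p x' y)))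
        = p x y * Real.log (p x y / margX p x) - p x y * Real.log (margY p y) := by
      intro x y
      have h1 : (∑ y', p x y') = margX p x := rfl
      have h2 : (∑ x', p x' y) = margY p y := rfl
      rw [h1, h2]
      exact split_log _ _ _ (hpnn x y) (fun _ => hX x)
        (fun h => lt_of_lt_of_le ((hpnn x y).lt_of_ne' h) (hmYle2 x y))
    simp_rw [hterm, Finset.sum_sub_distrib]
    have h3 : (∑ x, ∑ y, p x y * Real.log (margY p y))
        = ∑ y, margY p y * Real.log (margY p y) := by
      rw [Finset.sum_comm]
      refine Finset.sum_congr rfl fun y _ => ?_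
      rw [← Finset.sum_mul]
      rfl
    rw [h3]
  -- I(Y;U) = -H(Y|U) - ∑ margY log margY
  have e2 : IYU p w = -condEntropyYU p w - ∑ y, margY p y * Real.log (margY p y) := by
    unfold IYU mutualInfo condEntropyYU
    rw [neg_neg]
    have hterm : ∀ y u, pYU p w y u *
          Real.log (pYU p w y u / ((∑ u', pYU p w y u') * (∑ y', pYU p w y' u)))
        = pYU p w y u * Real.log (pYU p w y u / pU p w u)
          - pYU p w y u * Real.log (margY p y) := by
      intro y u
      rw [hmY y, hpUeq u, mul_comm (margY p y) (pU p w u)]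
      exact split_log _ _ _ (hpYUnn y u)
        (fun h => lt_of_lt_of_le ((hpYUnn y u).lt_of_ne' h) (hpUle y u))
        (fun h => lt_of_lt_of_le ((hpYUnn y u).lt_of_ne' h) (hmYle y u))
    simp_rw [hterm, Finset.sum_sub_distrib]
    have h3 : (∑ y, ∑ u, pYU p w y u * Real.log (margY p y))
        = ∑ y, margY p y * Real.log (margY p y) := by
      refine Finset.sum_congr rfl fun y _ => ?_
      rw [← Finset.sum_mul, hmY y]
    rw [h3]
  refine ⟨?_, key2⟩
  rw [key2, e1, e2]
  ring
end
end

section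
/- (Joint typicality lemma, lower bound.) Let (X,Y) ∼ p_{XY} on finite sets 𝒳×𝒴, and let 0 < ε' < ε. Then there exists δ(ε) with δ(ε) → 0 as ε → 0 such that for every x^n ∈ S_{ε'}^n(X) and Y^n drawn i.i.d. from the marginal p_Y (independently of x^n), P{ (x^n, Y^n) ∈ S_ε^n(X,Y) } ≥ 2^{−n(I(X;Y)+δ(ε))} for all sufficiently large n. -/
open Finset

noncomputable section

variable {𝒳 𝒴 : Type*} [Fintype 𝒳] [Fintype 𝒴]

/-- Mutual information in bits (logarithm base 2) of a joint distribution in curried form. -/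
def mutualInfo2 {A B : Type*} [Fintype A] [Fintype B] (p : A → B → ℝ) : ℝ :=
  ∑ a, ∑ b, p a b * Real.logb 2 (p a b / ((∑ b', p a b') * (∑ a', p a' b)))

/-- Kullback–Leibler divergence in bits (logarithm base 2). -/
def klDiv2 {A : Type*} [Fintype A] (p q : A → ℝ) : ℝ :=
  ∑ a, p a * Real.logb 2 (p a / q a)

/-- Shannon entropy in bits (logarithm base 2). -/
def entropy2 {A : Type*} [Fintype A] (p : A → ℝ) : ℝ :=
  -∑ a, p a * Real.logb 2 (p a)

/-- The IB distortion in bits: `d_IB(x, u) = KL(p_{Y|X}(·|x) ‖ p_{Y|U}(·|u))`. -/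
def dIB2 {𝒳 𝒴 U : Type*} [Fintype 𝒳] [Fintype 𝒴] [Fintype U]
    (p : 𝒳 → 𝒴 → ℝ) (w : 𝒳 → U → ℝ) (x : 𝒳) (u : U) : ℝ :=
  klDiv2 (fun y => p x y / margX p x) (fun y => pYU p w y u / pU p w u)

/-- Expected IB distortion in bits, `E[d_IB(X, U)]`. -/
def EdIB2 {𝒳 𝒴 U : Type*} [Fintype 𝒳] [Fintype 𝒴] [Fintype U]
    (p : 𝒳 → 𝒴 → ℝ) (w : 𝒳 → U → ℝ) : ℝ :=
  ∑ x, ∑ u, margX p x * w x u * dIB2 p w x u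

/-- Mutual information `I(X; U)` in bits under the Markov chain `Y — X — U`. -/
def IXU2 {𝒳 𝒴 U : Type*} [Fintype 𝒳] [Fintype 𝒴] [Fintype U]
    (p : 𝒳 → 𝒴 → ℝ) (w : 𝒳 → U → ℝ) : ℝ :=
  mutualInfo2 (fun x u => margX p x * w x u)

/-- Mutual information `I(Y; U)` in bits under the Markov chain `Y — X — U`. -/
def IYU2 {𝒳 𝒴 U : Type*} [Fintype 𝒳] [Fintype 𝒴] [Fintype U]
    (p : 𝒳 → 𝒴 → ℝ) (w : 𝒳 → U → ℝ) : ℝ :=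
  mutualInfo2 (fun y u => pYU p w y u)

/-- The empirical distribution `π(x|x^n) = (1/n)·|{i : xᵢ = x}|` of a sequence `x^n`. -/
def empDist {𝒳 : Type*} [Fintype 𝒳] [DecidableEq 𝒳] {n : ℕ} (xs : Fin n → 𝒳) (x : 𝒳) : ℝ :=
  (n : ℝ)⁻¹ * (Finset.univ.filter fun i => xs i = x).card

/-- The ε-typical set
`S_ε^n(X) = { x^n : |π(x|x^n) − p_X(x)| ≤ ε·p_X(x) for all x }`. -/
def typSet {𝒳 : Type*} [Fintype 𝒳] [DecidableEq 𝒳] (pX : 𝒳 → ℝ) (ε : ℝ) (n : ℕ) :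
    Set (Fin n → 𝒳) :=
  {xs | ∀ x, |empDist xs x - pX x| ≤ ε * pX x}

/-- The empirical joint distribution `π(x,y|x^n,y^n) = (1/n)·|{i : xᵢ = x, yᵢ = y}|`. -/
def empDist2 {𝒳 𝒴 : Type*} [Fintype 𝒳] [Fintype 𝒴] [DecidableEq 𝒳] [DecidableEq 𝒴] {n : ℕ}
    (xs : Fin n → 𝒳) (ys : Fin n → 𝒴) (x : 𝒳) (y : 𝒴) : ℝ :=
  (n : ℝ)⁻¹ * (Finset.univ.filter fun i => xs i = x ∧ ys i = y).card

/-- The jointly ε-typical set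
`S_ε^n(X,Y) = { (x^n,y^n) : |π(x,y|x^n,y^n) − p_{XY}(x,y)| ≤ ε·p_{XY}(x,y) for all (x,y) }`. -/
def typSet2 {𝒳 𝒴 : Type*} [Fintype 𝒳] [Fintype 𝒴] [DecidableEq 𝒳] [DecidableEq 𝒴]
    (p : 𝒳 → 𝒴 → ℝ) (ε : ℝ) (n : ℕ) : Set ((Fin n → 𝒳) × (Fin n → 𝒴)) :=
  {q | ∀ x y, |empDist2 q.1 q.2 x y - p x y| ≤ ε * p x y}

lemma sum_prod_pi {n : ℕ} {𝒴 : Type*} [Fintype 𝒴] [DecidableEq 𝒴] (f : Fin n → 𝒴 → ℝ) :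
    ∑ ys : Fin n → 𝒴, ∏ i, f i (ys i) = ∏ i, ∑ y, f i y := by
  rw [Finset.prod_univ_sum, Fintype.piFinset_univ]

lemma exp_total {n : ℕ} {𝒴 : Type*} [Fintype 𝒴] [DecidableEq 𝒴]
    (q : Fin n → 𝒴 → ℝ) (hq : ∀ i, ∑ y, q i y = 1) :
    ∑ ys : Fin n → 𝒴, (∏ i, q i (ys i)) = 1 := by
  rw [sum_prod_pi]
  simp [hq]

lemma sum_fiber_count {n : ℕ} {𝒳 𝒴 : Type*} [Fintype 𝒳] [Fintype 𝒴]
    [DecidableEq 𝒳] [DecidableEq 𝒴] (xs : Fin n → 𝒳) (ys : Fin n → 𝒴) (g : 𝒳 × 𝒴 → ℝ) :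
    ∑ i, g (xs i, ys i)
      = ∑ z : 𝒳 × 𝒴, ((univ.filter fun i => xs i = z.1 ∧ ys i = z.2).card : ℝ) * g z := by
  rw [← Finset.sum_fiberwise univ (fun i => (xs i, ys i)) (fun i => g (xs i, ys i))]
  refine Finset.sum_congr rfl fun z _ => ?_
  have h1 : (univ.filter fun i => (xs i, ys i) = z)
      = (univ.filter fun i => xs i = z.1 ∧ ys i = z.2) := by
    apply Finset.filter_congr
    intro i _
    simp [Prod.ext_iff]
  have h2 : ∀ i ∈ (univ.filter fun i => (xs i, ys i) = z), g (xs i, ys i) = g z := by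
    intro i hi
    rw [Finset.mem_filter] at hi
    rw [hi.2]
  rw [Finset.sum_congr rfl h2, Finset.sum_const, nsmul_eq_mul, h1]


lemma exp_prod {n : ℕ} {𝒴 : Type*} [Fintype 𝒴] [DecidableEq 𝒴]
    (q g : Fin n → 𝒴 → ℝ) (hq : ∀ i, ∑ y, q i y = 1) (S : Finset (Fin n)) :
    ∑ ys : Fin n → 𝒴, (∏ i, q i (ys i)) * ∏ i ∈ S, g i (ys i)
      = ∏ i ∈ S, ∑ y, q i y * g i y := by
  have key : ∀ ys : Fin n → 𝒴,
      (∏ i, q i (ys i)) * ∏ i ∈ S, g i (ys i)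
        = ∏ i, (q i (ys i) * (if i ∈ S then g i (ys i) else 1)) := by
    intro ys
    rw [Finset.prod_mul_distrib]
    congr 1
    rw [Finset.prod_ite_mem, Finset.univ_inter]
  simp_rw [key]
  rw [sum_prod_pi (fun i y => q i y * if i ∈ S then g i y else 1)]
  have key2 : ∀ i : Fin n, ∑ y, q i y * (if i ∈ S then g i y else 1)
      = if i ∈ S then (∑ y, q i y * g i y) else 1 := by
    intro i
    by_cases h : i ∈ S <;> simp [h, hq i]
  simp_rw [key2]
  rw [Finset.prod_ite_mem, Finset.univ_inter]

lemma exp_single {n : ℕ} {𝒴 : Type*} [Fintype 𝒴] [DecidableEq 𝒴]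
    (q : Fin n → 𝒴 → ℝ) (hq : ∀ i, ∑ y, q i y = 1) (j : Fin n) (g : 𝒴 → ℝ) :
    ∑ ys : Fin n → 𝒴, (∏ i, q i (ys i)) * g (ys j) = ∑ y, q j y * g y := by
  have := exp_prod q (fun _ => g) hq {j}
  simpa using this

lemma exp_pair {n : ℕ} {𝒴 : Type*} [Fintype 𝒴] [DecidableEq 𝒴]
    (q : Fin n → 𝒴 → ℝ) (hq : ∀ i, ∑ y, q i y = 1) (j k : Fin n) (hjk : j ≠ k) (g : 𝒴 → ℝ) :
    ∑ ys : Fin n → 𝒴, (∏ i, q i (ys i)) * (g (ys j) * g (ys k))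
      = (∑ y, q j y * g y) * (∑ y, q k y * g y) := by
  have := exp_prod q (fun _ => g) hq {j, k}
  simp only [Finset.prod_pair hjk] at this
  exact this

lemma var_bound {n : ℕ} {𝒴 : Type*} [Fintype 𝒴] [DecidableEq 𝒴]
    (q : Fin n → 𝒴 → ℝ) (hq : ∀ i, ∑ y, q i y = 1)
    (S : Finset (Fin n)) (y : 𝒴) (w : ℝ) (hw : ∀ i ∈ S, q i y = w) :
    ∑ ys : Fin n → 𝒴, (∏ i, q i (ys i)) *
        ((∑ i ∈ S, (if ys i = y then (1:ℝ) else 0)) - S.card * w) ^ 2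
      = S.card * (w * (1 - w)) := by
  set χ : 𝒴 → ℝ := fun y' => if y' = y then 1 else 0 with hχ
  have hχsum : ∀ j ∈ S, (∑ y', q j y' * χ y') = w := by
    intro j hj
    have : (∑ y', q j y' * χ y') = q j y := by
      simp_rw [hχ, mul_ite, mul_one, mul_zero]
      rw [Finset.sum_ite_eq']
      simp
    rw [this, hw j hj]
  have hEχ : ∀ j ∈ S, ∑ ys : Fin n → 𝒴, (∏ i, q i (ys i)) * χ (ys j) = w := by
    intro j hj
    rw [exp_single q hq j χ, hχsum j hj]
  have hEχχ : ∀ j ∈ S, ∀ k ∈ S, ∑ ys : Fin n → 𝒴, (∏ i, q i (ys i)) * (χ (ys j) * χ (ys k))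
      = if j = k then w else w ^ 2 := by
    intro j hj k hk
    by_cases h : j = k
    · subst h
      simp only [if_true]
      have : ∀ ys : Fin n → 𝒴, χ (ys j) * χ (ys j) = χ (ys j) := by
        intro ys; simp_rw [hχ]; split <;> simp
      simp_rw [this]
      exact hEχ j hj
    · rw [if_neg h, exp_pair q hq j k h χ, hχsum j hj, hχsum k hk, sq]
  have expand : ∀ ys : Fin n → 𝒴,
      (∏ i, q i (ys i)) * ((∑ i ∈ S, χ (ys i)) - S.card * w) ^ 2
      = (∑ j ∈ S, ∑ k ∈ S, (∏ i, q i (ys i)) * (χ (ys j) * χ (ys k)))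
        - 2 * (S.card * w) * (∑ j ∈ S, (∏ i, q i (ys i)) * χ (ys j))
        + (S.card * w) ^ 2 * (∏ i, q i (ys i)) := by
    intro ys
    have e1 : (∑ j ∈ S, ∑ k ∈ S, (∏ i, q i (ys i)) * (χ (ys j) * χ (ys k)))
        = (∏ i, q i (ys i)) * ((∑ i ∈ S, χ (ys i)) * (∑ i ∈ S, χ (ys i))) := by
      rw [Finset.sum_mul_sum, Finset.mul_sum]
      refine Finset.sum_congr rfl fun j _ => ?_
      rw [Finset.mul_sum]
    have e2 : (∑ j ∈ S, (∏ i, q i (ys i)) * χ (ys j))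
        = (∏ i, q i (ys i)) * (∑ i ∈ S, χ (ys i)) := by
      rw [← Finset.mul_sum]
    rw [e1, e2]
    ring
  change ∑ ys : Fin n → 𝒴, (∏ i, q i (ys i)) * ((∑ i ∈ S, χ (ys i)) - S.card * w) ^ 2 = S.card * (w * (1 - w))
  simp_rw [expand]
  rw [Finset.sum_add_distrib, Finset.sum_sub_distrib]
  have hA : (∑ ys : Fin n → 𝒴, ∑ j ∈ S, ∑ k ∈ S, (∏ i, q i (ys i)) * (χ (ys j) * χ (ys k)))
      = ∑ j ∈ S, ∑ k ∈ S, (if j = k then w else w ^ 2) := by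
    rw [Finset.sum_comm]
    refine Finset.sum_congr rfl fun j hj => ?_
    rw [Finset.sum_comm]
    exact Finset.sum_congr rfl fun k hk => hEχχ j hj k hk
  have hB : (∑ ys : Fin n → 𝒴, 2 * (S.card * w) * (∑ j ∈ S, (∏ i, q i (ys i)) * χ (ys j)))
      = 2 * (S.card * w) * (S.card * w) := by
    rw [← Finset.mul_sum, Finset.sum_comm]
    congr 1
    rw [Finset.sum_congr rfl (fun j hj => hEχ j hj), Finset.sum_const, nsmul_eq_mul]
  have hC : (∑ ys : Fin n → 𝒴, (S.card * w) ^ 2 * (∏ i, q i (ys i)))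
      = (S.card * w) ^ 2 := by
    rw [← Finset.mul_sum, exp_total q hq, mul_one]
  rw [hA, hB, hC]
  have hdiag : (∑ j ∈ S, ∑ k ∈ S, (if j = k then w else w ^ 2))
      = S.card * (S.card * w ^ 2 + (w - w ^ 2)) := by
    rw [Finset.sum_congr rfl (fun j hj => ?_), Finset.sum_const, nsmul_eq_mul]
    have : ∀ k, (if j = k then w else w ^ 2) = w ^ 2 + (if k = j then w - w ^ 2 else 0) := by
      intro k
      by_cases h : j = k
      · subst h; simp
      · simp [h, Ne.symm h]
    simp_rw [this]
    rw [Finset.sum_add_distrib, Finset.sum_const, Finset.sum_ite_eq' S j, if_pos hj,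
      nsmul_eq_mul]
  rw [hdiag]
  ring

set_option maxHeartbeats 2000000 in
/-- **Joint typicality lemma (lower bound).**
Let `(X,Y) ∼ p_{XY}` on finite sets `𝒳 × 𝒴`.  There exists `δ(ε)` with `δ(ε) → 0` as
`ε → 0⁺` such that, for all `0 < ε' < ε < 1`, every `x^n ∈ S_{ε'}^n(X)` and `Y^n` drawn
i.i.d. from the marginal `p_Y` (independently of `x^n`) satisfy
`P{(x^n, Y^n) ∈ S_ε^n(X,Y)} ≥ 2^{−n(I(X;Y)+δ(ε))}` for all sufficiently large `n`. -/
theorem joint_typicality_lemma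
    {𝒳 𝒴 : Type*} [Fintype 𝒳] [Fintype 𝒴] [DecidableEq 𝒳] [DecidableEq 𝒴]
    (p : 𝒳 → 𝒴 → ℝ) (hp : IsJoint p) :
    ∃ δ : ℝ → ℝ, Filter.Tendsto δ (nhdsWithin 0 (Set.Ioi 0)) (nhds 0) ∧
      ∀ ε : ℝ, 0 < ε → ε < 1 → ∀ ε' : ℝ, 0 < ε' → ε' < ε →
        ∃ N : ℕ, ∀ n ≥ N, ∀ xs ∈ typSet (margX p) ε' n,
          (2 : ℝ) ^ (-(n : ℝ) * (mutualInfo2 p + δ ε)) ≤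
            ∑ ys : Fin n → 𝒴,
              Set.indicator (typSet2 p ε n) (fun q => ∏ i, margY p (q.2 i)) (xs, ys) := by
  classical
  obtain ⟨hp0, hp1⟩ := hp
  set L : ℝ := ∑ z : 𝒳 × 𝒴, p z.1 z.2 * |Real.logb 2 (p z.1 z.2 / (margX p z.1 * margY p z.2))|
    with hLdef
  refine ⟨fun ε => ε * (L + 1), ?_, ?_⟩
  · have h : Filter.Tendsto (fun ε : ℝ => ε * (L + 1)) (nhds 0) (nhds (0 * (L + 1))) :=
      (continuous_id.mul continuous_const).tendsto 0
    rw [zero_mul] at h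
    exact h.mono_left nhdsWithin_le_nhds
  intro ε hε hε1 ε' hε' hε'ε
  -- minimum positive probability
  have hexz : ∃ z : 𝒳 × 𝒴, p z.1 z.2 ≠ 0 := by
    by_contra h
    push_neg at h
    simp only [fun x y => h (x, y)] at hp1
    simp at hp1
  obtain ⟨z₀, hz₀mem, hz₀min⟩ := Finset.exists_min_image
    (univ.filter fun z : 𝒳 × 𝒴 => p z.1 z.2 ≠ 0) (fun z => p z.1 z.2)
    (by obtain ⟨z, hz⟩ := hexz; exact ⟨z, by simp [hz]⟩)
  set c : ℝ := p z₀.1 z₀.2 with hcdef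
  have hc0 : 0 < c := by
    rw [Finset.mem_filter] at hz₀mem
    exact lt_of_le_of_ne (hp0 _ _) (Ne.symm hz₀mem.2)
  have hcmin : ∀ x y, p x y ≠ 0 → c ≤ p x y := by
    intro x y h
    exact hz₀min (x, y) (by simp [h])
  set K : ℝ := (Fintype.card (𝒳 × 𝒴) : ℝ) with hKdef
  refine ⟨max (max 1 ⌈1/ε⌉₊) ⌈K / (2 * (ε - ε')^2 * c^2)⌉₊, ?_⟩
  intro n hn xs hxs
  have hn1 : 1 ≤ n := le_trans (le_max_of_le_left (le_max_left _ _)) hn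
  have hnR : (0:ℝ) < n := by exact_mod_cast hn1
  have hnε : 1 ≤ (n:ℝ) * ε := by
    have h1 : (⌈1/ε⌉₊ : ℝ) ≤ n := by
      exact_mod_cast le_trans (le_max_of_le_left (le_max_right _ _)) hn
    have h2 : 1/ε ≤ (n:ℝ) := le_trans (Nat.le_ceil _) h1
    rw [div_le_iff₀ hε] at h2
    linarith
  have hnK : K / (2 * (ε - ε')^2 * c^2) ≤ (n:ℝ) := by
    have h1 : (⌈K / (2 * (ε - ε')^2 * c^2)⌉₊ : ℝ) ≤ n := by
      exact_mod_cast le_trans (le_max_of_le_right le_rfl) hn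
    exact le_trans (Nat.le_ceil _) h1
  -- the conditional kernel
  set q : Fin n → 𝒴 → ℝ := fun i y => p (xs i) y / margX p (xs i) with hqdef
  have hxs_pos : ∀ i, 0 < margX p (xs i) := by
    intro i
    have hm0 : (0:ℝ) ≤ margX p (xs i) := Finset.sum_nonneg fun y _ => hp0 (xs i) y
    rcases lt_or_eq_of_le hm0 with h | h
    · exact h
    · exfalso
      have h1 := hxs (xs i)
      rw [← h, mul_zero, sub_zero] at h1
      have h2 : empDist xs (xs i) = 0 := le_antisymm (le_of_abs_le h1)
        (by unfold empDist; positivity)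
      unfold empDist at h2
      field_simp at h2
      simp only [mul_zero, Nat.cast_eq_zero, Finset.card_eq_zero] at h2
      have h4 : i ∈ univ.filter fun j => xs j = xs i := by simp
      rw [h2] at h4
      simp at h4
  have hq0 : ∀ i y, 0 ≤ q i y := fun i y => div_nonneg (hp0 _ _) (hxs_pos i).le
  have hq1 : ∀ i, ∑ y, q i y = 1 := by
    intro i
    rw [hqdef]
    rw [← Finset.sum_div]
    exact div_self (hxs_pos i).ne'
  set Q : (Fin n → 𝒴) → ℝ := fun ys => ∏ i, q i (ys i) with hQdef
  have hQ0 : ∀ ys, 0 ≤ Q ys := fun ys => Finset.prod_nonneg fun i _ => hq0 i (ys i)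
  set TF : Finset (Fin n → 𝒴) := univ.filter (fun ys => (xs, ys) ∈ typSet2 p ε n) with hTFdef
  set t : ℝ := -(n : ℝ) * (mutualInfo2 p + ε * L) with htdef
  have hA : ∀ ys ∈ TF, (2:ℝ) ^ t * Q ys ≤ ∏ i, margY p (ys i) := by
    intro ys hys
    rw [hTFdef, Finset.mem_filter] at hys
    have htyp : ∀ x y, |empDist2 xs ys x y - p x y| ≤ ε * p x y := hys.2
    set cnt : 𝒳 × 𝒴 → ℝ :=
      fun z => ((univ.filter fun i => xs i = z.1 ∧ ys i = z.2).card : ℝ) with hcntdef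
    have hcnt : ∀ z : 𝒳 × 𝒴, |cnt z - n * p z.1 z.2| ≤ (n:ℝ) * (ε * p z.1 z.2) := by
      intro z
      have h1 := htyp z.1 z.2
      have h2 : cnt z - n * p z.1 z.2 = (n:ℝ) * (empDist2 xs ys z.1 z.2 - p z.1 z.2) := by
        rw [empDist2, hcntdef]
        field_simp
      rw [h2, abs_mul, abs_of_pos hnR]
      exact mul_le_mul_of_nonneg_left h1 hnR.le
    have hppos : ∀ i, 0 < p (xs i) (ys i) := by
      intro i
      rcases (hp0 (xs i) (ys i)).lt_or_eq with h | h
      · exact h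
      · exfalso
        have h1 := hcnt (xs i, ys i)
        rw [← h] at h1
        have h1' : |cnt (xs i, ys i)| ≤ 0 := by simpa using h1
        have h2 : cnt (xs i, ys i) = 0 :=
          abs_eq_zero.mp (le_antisymm h1' (abs_nonneg _))
        have h3 : i ∈ univ.filter fun j => xs j = xs i ∧ ys j = ys i := by simp
        simp only [hcntdef, Nat.cast_eq_zero, Finset.card_eq_zero] at h2
        rw [h2] at h3
        simp at h3
    have hqpos : ∀ i, 0 < q i (ys i) := fun i => div_pos (hppos i) (hxs_pos i)
    have hQpos : 0 < Q ys := Finset.prod_pos fun i _ => hqpos i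
    have hMpos : ∀ i, 0 < margY p (ys i) := by
      intro i
      exact lt_of_lt_of_le (hppos i)
        (Finset.single_le_sum (fun x _ => hp0 x (ys i)) (Finset.mem_univ (xs i)))
    set G : 𝒳 × 𝒴 → ℝ := fun z => margX p z.1 * margY p z.2 / p z.1 z.2 with hGdef
    have hGpos : ∀ i, 0 < G (xs i, ys i) :=
      fun i => div_pos (mul_pos (hxs_pos i) (hMpos i)) (hppos i)
    have hprod : ∏ i, margY p (ys i) = Q ys * ∏ i, G (xs i, ys i) := by
      rw [hQdef, ← Finset.prod_mul_distrib]
      refine Finset.prod_congr rfl fun i _ => ?_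
      refine Eq.symm ?_
      show p (xs i) (ys i) / margX p (xs i)
          * (margX p (xs i) * margY p (ys i) / p (xs i) (ys i)) = margY p (ys i)
      rw [div_mul_div_comm,
        show p (xs i) (ys i) * (margX p (xs i) * margY p (ys i))
          = margY p (ys i) * (margX p (xs i) * p (xs i) (ys i)) by ring,
        mul_div_assoc, div_self (mul_pos (hxs_pos i) (hppos i)).ne', mul_one]
    have hGprodpos : 0 < ∏ i, G (xs i, ys i) := Finset.prod_pos fun i _ => hGpos i
    have hsuf : (2:ℝ) ^ t ≤ ∏ i, G (xs i, ys i) := by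
      rw [Real.rpow_le_iff_le_log two_pos hGprodpos,
        Real.log_prod (fun i _ => (hGpos i).ne'),
        sum_fiber_count xs ys (fun z => Real.log (G z))]
      set r : 𝒳 × 𝒴 → ℝ := fun z => p z.1 z.2 / (margX p z.1 * margY p z.2) with hrdef
      have hterm : ∀ z : 𝒳 × 𝒴,
          -((n:ℝ) * (p z.1 z.2 * Real.log (r z)) + (n:ℝ) * ε * (p z.1 z.2 * |Real.log (r z)|))
            ≤ cnt z * Real.log (G z) := by
        intro z
        rcases (hp0 z.1 z.2).lt_or_eq with hpz | hpz
        · have hmx : 0 < margX p z.1 :=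
            lt_of_lt_of_le hpz (Finset.single_le_sum (fun y _ => hp0 z.1 y) (Finset.mem_univ z.2))
          have hmy : 0 < margY p z.2 :=
            lt_of_lt_of_le hpz (Finset.single_le_sum (fun x _ => hp0 x z.2) (Finset.mem_univ z.1))
          have hGr : Real.log (r z) = -Real.log (G z) := by
            rw [hrdef, hGdef]
            simp only
            rw [← Real.log_inv, inv_div]
          have hcz := hcnt z
          have hcz0 : 0 ≤ cnt z := by rw [hcntdef]; positivity
          rw [hGr]
          set s := Real.log (G z)
          have key : ((n:ℝ) * p z.1 z.2 - cnt z) * s ≤ (n:ℝ) * (ε * p z.1 z.2) * |s| := by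
            calc ((n:ℝ) * p z.1 z.2 - cnt z) * s ≤ |((n:ℝ) * p z.1 z.2 - cnt z) * s| :=
                  le_abs_self _
              _ = |(n:ℝ) * p z.1 z.2 - cnt z| * |s| := abs_mul _ _
              _ ≤ (n:ℝ) * (ε * p z.1 z.2) * |s| := by
                  apply mul_le_mul_of_nonneg_right _ (abs_nonneg s)
                  rw [abs_sub_comm]
                  exact hcz
          rw [sub_mul] at key
          rw [abs_neg]
          ring_nf
          ring_nf at key
          linarith [key]
        · have hcz := hcnt z
          rw [← hpz, mul_zero, mul_zero, sub_zero, mul_zero] at hcz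
          have h2 : cnt z = 0 := le_antisymm (le_of_abs_le hcz) (by rw [hcntdef]; positivity)
          rw [h2, ← hpz]
          simp
      refine le_trans (le_of_eq ?_) (Finset.sum_le_sum fun z _ => hterm z)
      have hlog2 : (0:ℝ) < Real.log 2 := Real.log_pos (by norm_num)
      have hI : mutualInfo2 p * Real.log 2 = ∑ z : 𝒳 × 𝒴, p z.1 z.2 * Real.log (r z) := by
        have e1 : ∑ z : 𝒳 × 𝒴, p z.1 z.2 * Real.log (r z)
            = ∑ a, ∑ b, p a b * Real.log (r (a, b)) :=
          Fintype.sum_prod_type (f := fun z : 𝒳 × 𝒴 => p z.1 z.2 * Real.log (r z))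
        rw [e1, mutualInfo2, Finset.sum_mul]
        refine Finset.sum_congr rfl fun a _ => ?_
        rw [Finset.sum_mul]
        refine Finset.sum_congr rfl fun b _ => ?_
        simp only [hrdef, Real.logb, margX, margY]
        field_simp
      have hL2 : L * Real.log 2 = ∑ z : 𝒳 × 𝒴, p z.1 z.2 * |Real.log (r z)| := by
        rw [hLdef, Finset.sum_mul]
        refine Finset.sum_congr rfl fun z _ => ?_
        simp only [hrdef, Real.logb, abs_div, abs_of_pos hlog2]
        field_simp
      have expand : ∑ z : 𝒳 × 𝒴,
          -((n:ℝ) * (p z.1 z.2 * Real.log (r z)) + (n:ℝ) * ε * (p z.1 z.2 * |Real.log (r z)|))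
          = -((n:ℝ) * (∑ z : 𝒳 × 𝒴, p z.1 z.2 * Real.log (r z))
              + (n:ℝ) * ε * (∑ z : 𝒳 × 𝒴, p z.1 z.2 * |Real.log (r z)|)) := by
        rw [Finset.sum_neg_distrib, Finset.sum_add_distrib, ← Finset.mul_sum, ← Finset.mul_sum]
      rw [expand, ← hI, ← hL2, htdef]
      ring
    calc (2:ℝ) ^ t * Q ys ≤ (∏ i, G (xs i, ys i)) * Q ys :=
          mul_le_mul_of_nonneg_right hsuf (hQ0 ys)
      _ = Q ys * ∏ i, G (xs i, ys i) := mul_comm _ _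
      _ = ∏ i, margY p (ys i) := hprod.symm
  have hQapp : ∀ ys : Fin n → 𝒴, Q ys = ∏ i, q i (ys i) := fun _ => rfl
  have hB : 1/2 ≤ ∑ ys ∈ TF, Q ys := by
    set Bad : 𝒳 × 𝒴 → Finset (Fin n → 𝒴) := fun z =>
      univ.filter (fun ys => ¬ |empDist2 xs ys z.1 z.2 - p z.1 z.2| ≤ ε * p z.1 z.2) with hBaddef
    have hbad : ∀ z : 𝒳 × 𝒴, ∑ ys ∈ Bad z, Q ys ≤ 1 / (4 * n * (ε - ε')^2 * c^2) := by
      rintro ⟨x, y⟩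
      have hRHS0 : (0:ℝ) < 4 * n * (ε - ε')^2 * c^2 := by
        have h1 : (0:ℝ) < ε - ε' := sub_pos.mpr hε'ε
        positivity
      rcases (hp0 x y).lt_or_eq with hpz | hpz
      · -- positive probability cell
        set S : Finset (Fin n) := univ.filter (fun i => xs i = x) with hSdef
        set m : ℝ := (S.card : ℝ) with hmdef
        have hmX : 0 < margX p x :=
          lt_of_lt_of_le hpz (Finset.single_le_sum (fun y' _ => hp0 x y') (Finset.mem_univ y))
        set w : ℝ := p x y / margX p x with hwdef
        have hw0 : 0 ≤ w := div_nonneg (hp0 x y) hmX.le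
        have hw1 : w ≤ 1 := by
          rw [hwdef, div_le_one hmX]
          exact Finset.single_le_sum (fun y' _ => hp0 x y') (Finset.mem_univ y)
        have hwq : ∀ i ∈ S, q i y = w := by
          intro i hi
          rw [hSdef, Finset.mem_filter] at hi
          rw [hqdef, hwdef]
          simp only
          rw [hi.2]
        have hwm : w * margX p x = p x y := div_mul_cancel₀ _ hmX.ne'
        have hm_typ : |m - n * margX p x| ≤ ε' * ((n:ℝ) * margX p x) := by
          have h1 := hxs x
          have h2 : m - n * margX p x = (n:ℝ) * (empDist xs x - margX p x) := by
            rw [empDist, hmdef, hSdef]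
            field_simp
          rw [h2, abs_mul, abs_of_pos hnR]
          calc (n:ℝ) * |empDist xs x - margX p x| ≤ (n:ℝ) * (ε' * margX p x) :=
                mul_le_mul_of_nonneg_left h1 hnR.le
            _ = ε' * ((n:ℝ) * margX p x) := by ring
        have hF : ∀ ys : Fin n → 𝒴,
            ((univ.filter fun i => xs i = x ∧ ys i = y).card : ℝ)
              = ∑ i ∈ S, (if ys i = y then (1:ℝ) else 0) := by
          intro ys
          rw [hSdef, ← Finset.filter_filter, Finset.card_filter]
          push_cast
          rfl
        have hvar := var_bound q hq1 S y w hwq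
        simp only [← hQapp] at hvar
        have hm_le : m ≤ (n:ℝ) := by
          rw [hmdef]
          have := Finset.card_filter_le univ (fun i : Fin n => xs i = x)
          rw [Finset.card_univ, Fintype.card_fin] at this
          exact_mod_cast this
        have hm0 : 0 ≤ m := by rw [hmdef]; positivity
        have hvar_le : ∑ ys : Fin n → 𝒴, Q ys *
            ((∑ i ∈ S, (if ys i = y then (1:ℝ) else 0)) - m * w) ^ 2 ≤ (n:ℝ) / 4 := by
          rw [hvar]
          have hq14 : w * (1 - w) ≤ 1/4 := by nlinarith [sq_nonneg (2*w - 1)]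
          have hww0 : 0 ≤ w * (1 - w) := mul_nonneg hw0 (by linarith)
          calc m * (w * (1 - w)) ≤ (n:ℝ) * (1/4) :=
                mul_le_mul hm_le hq14 hww0 hnR.le
            _ = (n:ℝ)/4 := by ring
        set a : ℝ := (n:ℝ) * ((ε - ε') * p x y) with hadef
        have ha0 : 0 < a := mul_pos hnR (mul_pos (sub_pos.mpr hε'ε) hpz)
        have hdev : ∀ ys ∈ Bad (x, y),
            a ≤ |(∑ i ∈ S, (if ys i = y then (1:ℝ) else 0)) - m * w| := by
          intro ys hy
          rw [hBaddef, Finset.mem_filter] at hy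
          have hy2 := hy.2
          simp only at hy2
          have hemp : empDist2 xs ys x y
              = (n:ℝ)⁻¹ * ((univ.filter fun i => xs i = x ∧ ys i = y).card : ℝ) := rfl
          set F : ℝ := (∑ i ∈ S, (if ys i = y then (1:ℝ) else 0)) with hFdef
          have hF2 : ((univ.filter fun i => xs i = x ∧ ys i = y).card : ℝ) = F := hF ys
          have hdev1 : (n:ℝ) * (ε * p x y) < |F - n * p x y| := by
            have h3 : F - n * p x y = (n:ℝ) * (empDist2 xs ys x y - p x y) := by
              rw [hemp, ← hF2]
              field_simp
            rw [h3, abs_mul, abs_of_pos hnR]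
            have h7 : ε * p x y < |empDist2 xs ys x y - p x y| := lt_of_not_ge hy2
            exact (mul_lt_mul_iff_right₀ hnR).mpr h7
          have hdev2 : |m * w - n * p x y| ≤ ε' * ((n:ℝ) * p x y) := by
            have h4 : m * w - n * p x y = w * (m - n * margX p x) := by
              rw [← hwm]; ring
            rw [h4, abs_mul, abs_of_nonneg hw0]
            calc w * |m - n * margX p x| ≤ w * (ε' * ((n:ℝ) * margX p x)) :=
                  mul_le_mul_of_nonneg_left hm_typ hw0
              _ = ε' * ((n:ℝ) * (w * margX p x)) := by ring
              _ = ε' * ((n:ℝ) * p x y) := by rw [hwm]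
          have htri : |F - n * p x y| ≤ |F - m * w| + |m * w - n * p x y| :=
            abs_sub_le F (m * w) ((n:ℝ) * p x y)
          have : a ≤ |F - m * w| := by
            have hεε' : ε' * ((n:ℝ) * p x y) + a ≤ (n:ℝ) * (ε * p x y) := by
              rw [hadef]; ring_nf; nlinarith [hpz, hnR]
            linarith
          exact this
        have hcheb : a^2 * ∑ ys ∈ Bad (x, y), Q ys ≤ (n:ℝ) / 4 := by
          rw [Finset.mul_sum]
          calc ∑ ys ∈ Bad (x, y), a^2 * Q ys
              ≤ ∑ ys ∈ Bad (x, y), Q ys *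
                  ((∑ i ∈ S, (if ys i = y then (1:ℝ) else 0)) - m * w) ^ 2 := by
                refine Finset.sum_le_sum fun ys hy => ?_
                have h5 : a^2 ≤ ((∑ i ∈ S, (if ys i = y then (1:ℝ) else 0)) - m * w) ^ 2 := by
                  have := hdev ys hy
                  calc a^2 ≤ |(∑ i ∈ S, (if ys i = y then (1:ℝ) else 0)) - m * w|^2 := by
                        exact pow_le_pow_left₀ ha0.le this 2
                    _ = _ := sq_abs _
                calc a^2 * Q ys ≤ ((∑ i ∈ S, (if ys i = y then (1:ℝ) else 0)) - m * w) ^ 2 * Q ys :=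
                      mul_le_mul_of_nonneg_right h5 (hQ0 ys)
                  _ = Q ys * _ := mul_comm _ _
            _ ≤ ∑ ys : Fin n → 𝒴, Q ys *
                  ((∑ i ∈ S, (if ys i = y then (1:ℝ) else 0)) - m * w) ^ 2 := by
                exact Finset.sum_le_sum_of_subset_of_nonneg (Finset.subset_univ _)
                  fun ys _ _ => mul_nonneg (hQ0 ys) (sq_nonneg _)
            _ ≤ (n:ℝ) / 4 := hvar_le
        have hfin : ∑ ys ∈ Bad (x, y), Q ys ≤ 1 / (4 * n * (ε - ε')^2 * c^2) := by
          have hQB0 : 0 ≤ ∑ ys ∈ Bad (x, y), Q ys :=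
            Finset.sum_nonneg fun ys _ => hQ0 ys
          have hcp : c ≤ p x y := hcmin x y hpz.ne'
          rw [← le_div_iff₀' (by positivity : (0:ℝ) < a^2)] at hcheb
          refine le_trans hcheb ?_
          rw [div_le_div_iff₀ (by positivity : (0:ℝ) < a^2) hRHS0]
          rw [hadef]
          have hcc : c * c ≤ p x y * p x y :=
            mul_le_mul hcp hcp hc0.le (hp0 x y)
          have hee : (0:ℝ) < (ε - ε') := sub_pos.mpr hε'ε
          nlinarith [hcc, hnR, hee, mul_pos hnR hnR, sq_nonneg (ε - ε'),
            mul_le_mul_of_nonneg_left hcc (mul_nonneg (mul_nonneg (mul_pos hnR hnR).le (sq_nonneg (ε - ε'))) (by norm_num : (0:ℝ) ≤ 1))]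
        exact hfin
      · -- zero probability cell
        have hz : ∑ ys ∈ Bad (x, y), Q ys = 0 := by
          refine Finset.sum_eq_zero fun ys hy => ?_
          rw [hBaddef, Finset.mem_filter] at hy
          have hy2 := hy.2
          simp only [← hpz, mul_zero, sub_zero] at hy2
          have hcard : (univ.filter fun i => xs i = x ∧ ys i = y) ≠ ∅ := by
            intro hcon
            apply hy2
            rw [empDist2, hcon]
            simp
          obtain ⟨i, hi⟩ := Finset.nonempty_iff_ne_empty.mpr hcard
          rw [Finset.mem_filter] at hi
          rw [hQapp]
          refine Finset.prod_eq_zero (Finset.mem_univ i) ?_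
          rw [hqdef]
          simp only
          rw [hi.2.1, hi.2.2, ← hpz, zero_div]
        rw [hz]
        positivity
    -- union bound
    have hQtot : ∑ ys : Fin n → 𝒴, Q ys = 1 := by
      simp only [hQapp]
      exact exp_total q hq1
    have hsplit : ∑ ys ∈ TF, Q ys
        + ∑ ys ∈ univ.filter (fun ys => ¬ ((xs, ys) ∈ typSet2 p ε n)), Q ys = 1 := by
      rw [hTFdef, Finset.sum_filter_add_sum_filter_not, hQtot]
    have hunion : ∑ ys ∈ univ.filter (fun ys => ¬ ((xs, ys) ∈ typSet2 p ε n)), Q ys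
        ≤ ∑ z : 𝒳 × 𝒴, ∑ ys ∈ Bad z, Q ys := by
      have hpt : ∀ ys ∈ univ.filter (fun ys : Fin n → 𝒴 => ¬ ((xs, ys) ∈ typSet2 p ε n)),
          Q ys ≤ ∑ z : 𝒳 × 𝒴, (if ys ∈ Bad z then Q ys else 0) := by
        intro ys hy
        rw [Finset.mem_filter] at hy
        have hy2 := hy.2
        simp only [typSet2, Set.mem_setOf_eq] at hy2
        push_neg at hy2
        obtain ⟨x, y, hxy⟩ := hy2
        have hmem : ys ∈ Bad (x, y) := by
          rw [hBaddef]
          simp only [Finset.mem_filter]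
          exact ⟨Finset.mem_univ _, not_le.mpr hxy⟩
        calc Q ys = (if ys ∈ Bad (x, y) then Q ys else 0) := (if_pos hmem).symm
          _ ≤ ∑ z : 𝒳 × 𝒴, (if ys ∈ Bad z then Q ys else 0) := by
              refine Finset.single_le_sum
                (f := fun z : 𝒳 × 𝒴 => if ys ∈ Bad z then Q ys else 0)
                (fun z _ => ?_) (Finset.mem_univ (x, y))
              split
              · exact hQ0 ys
              · exact le_rfl
      calc ∑ ys ∈ univ.filter (fun ys => ¬ ((xs, ys) ∈ typSet2 p ε n)), Q ys
          ≤ ∑ ys ∈ univ.filter (fun ys => ¬ ((xs, ys) ∈ typSet2 p ε n)),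
              ∑ z : 𝒳 × 𝒴, (if ys ∈ Bad z then Q ys else 0) := Finset.sum_le_sum hpt
        _ ≤ ∑ ys : Fin n → 𝒴, ∑ z : 𝒳 × 𝒴, (if ys ∈ Bad z then Q ys else 0) := by
            refine Finset.sum_le_sum_of_subset_of_nonneg (Finset.filter_subset _ _)
              fun ys _ _ => Finset.sum_nonneg fun z _ => ?_
            split
            · exact hQ0 ys
            · exact le_rfl
        _ = ∑ z : 𝒳 × 𝒴, ∑ ys : Fin n → 𝒴, (if ys ∈ Bad z then Q ys else 0) :=
            Finset.sum_comm
        _ = ∑ z : 𝒳 × 𝒴, ∑ ys ∈ Bad z, Q ys := by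
            refine Finset.sum_congr rfl fun z _ => ?_
            rw [Finset.sum_ite_mem, Finset.univ_inter]
    have htot : ∑ z : 𝒳 × 𝒴, ∑ ys ∈ Bad z, Q ys ≤ K * (1 / (4 * n * (ε - ε')^2 * c^2)) := by
      calc ∑ z : 𝒳 × 𝒴, ∑ ys ∈ Bad z, Q ys
          ≤ ∑ _z : 𝒳 × 𝒴, 1 / (4 * n * (ε - ε')^2 * c^2) :=
            Finset.sum_le_sum fun z _ => hbad z
        _ = K * (1 / (4 * n * (ε - ε')^2 * c^2)) := by
            rw [Finset.sum_const, nsmul_eq_mul, Finset.card_univ, hKdef]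
    have hhalf : K * (1 / (4 * n * (ε - ε')^2 * c^2)) ≤ 1/2 := by
      have hK0 : 0 ≤ K := by rw [hKdef]; positivity
      have hd : (0:ℝ) < 2 * (ε - ε')^2 * c^2 := by
        have := sub_pos.mpr hε'ε
        positivity
      have h6 : K ≤ (n:ℝ) * (2 * (ε - ε')^2 * c^2) := by
        rw [div_le_iff₀ hd] at hnK
        exact hnK
      rw [mul_one_div, div_le_div_iff₀ (by have := sub_pos.mpr hε'ε; positivity) (by norm_num)]
      nlinarith [h6]
    linarith [hbad, hsplit, hunion, htot, hhalf]
  -- final combination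
  have hrw : ∑ ys : Fin n → 𝒴,
      Set.indicator (typSet2 p ε n) (fun q => ∏ i, margY p (q.2 i)) (xs, ys)
      = ∑ ys ∈ TF, ∏ i, margY p (ys i) := by
    rw [hTFdef, Finset.sum_filter]
    refine Finset.sum_congr rfl fun ys _ => ?_
    rw [Set.indicator_apply]
  rw [hrw]
  have step1 : (2:ℝ) ^ (-(n : ℝ) * (mutualInfo2 p + ε * (L + 1)))
      = (2:ℝ) ^ t * (2:ℝ) ^ (-(n:ℝ) * ε) := by
    rw [← Real.rpow_add two_pos]
    congr 1
    rw [htdef]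
    ring
  have step2 : (2:ℝ) ^ (-(n:ℝ) * ε) ≤ 1/2 := by
    have h1 : -(n:ℝ) * ε ≤ -1 := by linarith
    calc (2:ℝ) ^ (-(n:ℝ) * ε) ≤ (2:ℝ) ^ (-1 : ℝ) :=
          Real.rpow_le_rpow_of_exponent_le one_le_two h1
      _ = 1/2 := by rw [Real.rpow_neg_one]; norm_num
  calc (2:ℝ) ^ (-(n : ℝ) * (mutualInfo2 p + ε * (L + 1)))
      = (2:ℝ) ^ t * (2:ℝ) ^ (-(n:ℝ) * ε) := step1
    _ ≤ (2:ℝ) ^ t * (1/2) := by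
        exact mul_le_mul_of_nonneg_left step2 (Real.rpow_nonneg (by norm_num) t)
    _ ≤ (2:ℝ) ^ t * ∑ ys ∈ TF, Q ys := mul_le_mul_of_nonneg_left hB
        (Real.rpow_nonneg (by norm_num) t)
    _ = ∑ ys ∈ TF, (2:ℝ) ^ t * Q ys := Finset.mul_sum _ _ _
    _ ≤ ∑ ys ∈ TF, ∏ i, margY p (ys i) := Finset.sum_le_sum hA
end
end

section
/- (Donsker–Varadhan / MINE representation of mutual information on finite spaces.) Let U, V be random variables on finite sets 𝒰, 𝒱 with joint distribution p_{UV} and marginals p_U, p_V. Then I(U;V) = sup over all functions γ: 𝒰×𝒱 → ℝ of { E_{(u,v)∼p_{UV}}[γ(u,v)] − log E_{(u,v)∼p_U⊗p_V}[exp(γ(u,v))] }. -/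
open Finset

noncomputable section

variable {𝒳 𝒴 : Type*} [Fintype 𝒳] [Fintype 𝒴]

/-- **Donsker–Varadhan / MINE representation of mutual information on finite spaces.**
Let `U, V` be random variables on finite sets `𝒰, 𝒱` with joint distribution `p_{UV}` and
marginals `p_U, p_V`.  Then
`I(U;V) = sup_{γ : 𝒰×𝒱 → ℝ} { E_{(u,v) ∼ p_{UV}}[γ(u,v)] − log E_{(u,v) ∼ p_U⊗p_V}[exp(γ(u,v))] }`. -/
theorem donsker_varadhan_mine
    {𝒰 𝒱 : Type*} [Fintype 𝒰] [Fintype 𝒱]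
    (p : 𝒰 → 𝒱 → ℝ) (hp : IsJoint p) :
    mutualInfo p =
      ⨆ γ : 𝒰 × 𝒱 → ℝ,
        ((∑ u, ∑ v, p u v * γ (u, v)) -
          Real.log (∑ u, ∑ v, (margX p u * margY p v) * Real.exp (γ (u, v)))) := by
  classical
  obtain ⟨hnn, hsum⟩ := hp
  have hqnn : ∀ u v, 0 ≤ margX p u * margY p v := fun u v =>
    mul_nonneg (Finset.sum_nonneg fun _ _ => hnn _ _) (Finset.sum_nonneg fun _ _ => hnn _ _)
  have hqpos : ∀ u v, 0 < p u v → 0 < margX p u * margY p v := by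
    intro u v h
    have h1 : p u v ≤ margX p u :=
      Finset.single_le_sum (fun v' _ => hnn u v') (Finset.mem_univ v)
    have h2 : p u v ≤ margY p v :=
      Finset.single_le_sum (fun u' _ => hnn u' v) (Finset.mem_univ u)
    exact mul_pos (lt_of_lt_of_le h h1) (lt_of_lt_of_le h h2)
  have hmx : ∑ u, margX p u = 1 := by simpa [margX] using hsum
  have hmy : ∑ v, margY p v = 1 := by
    have : ∑ v, ∑ u, p u v = 1 := by rw [Finset.sum_comm]; exact hsum
    simpa [margY] using this
  have hqsum : ∑ u, ∑ v, margX p u * margY p v = 1 := by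
    rw [← Finset.sum_mul_sum, hmx, hmy, one_mul]
  have hMI : mutualInfo p
      = ∑ u, ∑ v, p u v * Real.log (p u v / (margX p u * margY p v)) := rfl
  set F : (𝒰 × 𝒱 → ℝ) → ℝ := fun γ =>
    ((∑ u, ∑ v, p u v * γ (u, v)) -
      Real.log (∑ u, ∑ v, (margX p u * margY p v) * Real.exp (γ (u, v)))) with hF
  -- Upper bound : F γ ≤ mutualInfo p
  have upper : ∀ γ : 𝒰 × 𝒱 → ℝ, F γ ≤ mutualInfo p := by
    intro γ
    set S := ∑ u, ∑ v, (margX p u * margY p v) * Real.exp (γ (u, v)) with hS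
    have hSterm : ∀ u v, 0 ≤ (margX p u * margY p v) * Real.exp (γ (u, v)) := fun u v =>
      mul_nonneg (hqnn u v) (Real.exp_pos _).le
    have hSpos : 0 < S := by
      obtain ⟨u, hu⟩ := Finset.exists_ne_zero_of_sum_ne_zero
        (by rw [hqsum]; norm_num : ∑ u, ∑ v, margX p u * margY p v ≠ 0)
      obtain ⟨v, hv⟩ := Finset.exists_ne_zero_of_sum_ne_zero hu.2
      have hq : 0 < margX p u * margY p v := lt_of_le_of_ne (hqnn u v) (Ne.symm hv.2)
      have h1 : 0 < ∑ v, (margX p u * margY p v) * Real.exp (γ (u, v)) :=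
        Finset.sum_pos' (fun v _ => hSterm u v)
          ⟨v, Finset.mem_univ v, mul_pos hq (Real.exp_pos _)⟩
      exact Finset.sum_pos' (fun u _ => Finset.sum_nonneg fun v _ => hSterm u v)
        ⟨u, Finset.mem_univ u, h1⟩
    have key : ∀ u v,
        p u v * γ (u, v) - p u v * Real.log (p u v / (margX p u * margY p v))
          - p u v * Real.log S
        ≤ (margX p u * margY p v) * Real.exp (γ (u, v)) / S - p u v := by
      intro u v
      rcases eq_or_lt_of_le (hnn u v) with h0 | hpos
      · rw [← h0]
        have : 0 ≤ (margX p u * margY p v) * Real.exp (γ (u, v)) / S :=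
          div_nonneg (hSterm u v) hSpos.le
        simpa using this
      · have hq := hqpos u v hpos
        have hx : 0 < (margX p u * margY p v) * Real.exp (γ (u, v)) / (S * p u v) := by
          positivity
        have hlog := Real.log_le_sub_one_of_pos hx
        rw [Real.log_div (by positivity) (by positivity),
          Real.log_mul (ne_of_gt hq) (Real.exp_ne_zero _), Real.log_exp,
          Real.log_mul (ne_of_gt hSpos) (ne_of_gt hpos)] at hlog
        have hmul := mul_le_mul_of_nonneg_left hlog hpos.le
        have hrw : p u v * ((margX p u * margY p v) * Real.exp (γ (u, v)) / (S * p u v) - 1)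
            = (margX p u * margY p v) * Real.exp (γ (u, v)) / S - p u v := by
          field_simp
        rw [hrw] at hmul
        rw [Real.log_div (ne_of_gt hpos) (ne_of_gt hq)]
        nlinarith [hmul]
    have sum_key :
        ∑ u, ∑ v, (p u v * γ (u, v) - p u v * Real.log (p u v / (margX p u * margY p v))
          - p u v * Real.log S)
        ≤ ∑ u, ∑ v, ((margX p u * margY p v) * Real.exp (γ (u, v)) / S - p u v) :=
      Finset.sum_le_sum fun u _ => Finset.sum_le_sum fun v _ => key u v
    have hlhs :
        ∑ u, ∑ v, (p u v * γ (u, v) - p u v * Real.log (p u v / (margX p u * margY p v))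
          - p u v * Real.log S)
        = (∑ u, ∑ v, p u v * γ (u, v)) - mutualInfo p - Real.log S := by
      rw [hMI]
      have hlogS : ∑ u, ∑ v, p u v * Real.log S = Real.log S := by
        simp only [← Finset.sum_mul]
        rw [hsum, one_mul]
      simp only [Finset.sum_sub_distrib]
      rw [hlogS]
    have hrhs :
        ∑ u, ∑ v, ((margX p u * margY p v) * Real.exp (γ (u, v)) / S - p u v) = 0 := by
      simp only [Finset.sum_sub_distrib, ← Finset.sum_div]
      rw [← hS, hsum, div_self (ne_of_gt hSpos)]
      ring
    rw [hlhs, hrhs] at sum_key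
    simp only [hF]
    linarith
  -- Lower bound : for every ε > 0 there is γ with mutualInfo p - ε ≤ F γ
  have lower : ∀ ε : ℝ, 0 < ε → ∃ γ : 𝒰 × 𝒱 → ℝ, mutualInfo p - ε ≤ F γ := by
    intro ε hε
    set γ0 : 𝒰 × 𝒱 → ℝ := fun z =>
      if 0 < p z.1 z.2 then Real.log (p z.1 z.2 / (margX p z.1 * margY p z.2))
      else Real.log ε with hγ0
    refine ⟨γ0, ?_⟩
    have hE : ∑ u, ∑ v, p u v * γ0 (u, v) = mutualInfo p := by
      rw [hMI]
      refine Finset.sum_congr rfl fun u _ => Finset.sum_congr rfl fun v _ => ?_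
      by_cases h : 0 < p u v
      · simp [hγ0, h]
      · have h0 : p u v = 0 := le_antisymm (not_lt.mp h) (hnn u v)
        simp [h0]
    have hSform : ∀ u v, (margX p u * margY p v) * Real.exp (γ0 (u, v))
        = p u v + (if 0 < p u v then 0 else (margX p u * margY p v) * ε) := by
      intro u v
      by_cases h : 0 < p u v
      · have hq := hqpos u v h
        simp only [hγ0, if_pos h]
        rw [Real.exp_log (div_pos h hq)]
        field_simp
        rw [add_zero]; exact mul_div_cancel_left₀ _ (ne_of_gt hq)
      · have h0 : p u v = 0 := le_antisymm (not_lt.mp h) (hnn u v)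
        simp only [hγ0, if_neg h, h0, zero_add]
        rw [Real.exp_log hε, if_neg (lt_irrefl (0:ℝ))]
    set Q : ℝ := ∑ u, ∑ v, (if 0 < p u v then 0 else (margX p u * margY p v) * ε) with hQ
    have hSval : ∑ u, ∑ v, (margX p u * margY p v) * Real.exp (γ0 (u, v)) = 1 + Q := by
      rw [hQ]
      simp only [hSform, Finset.sum_add_distrib]
      rw [hsum]
    have hQnn : 0 ≤ Q := by
      apply Finset.sum_nonneg; intro u _
      apply Finset.sum_nonneg; intro v _
      split
      · exact le_rfl
      · exact mul_nonneg (hqnn u v) hε.le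
    have hQle : Q ≤ ε := by
      have h1 : Q ≤ ∑ u, ∑ v, (margX p u * margY p v) * ε := by
        apply Finset.sum_le_sum; intro u _
        apply Finset.sum_le_sum; intro v _
        split
        · exact mul_nonneg (hqnn u v) hε.le
        · exact le_rfl
      have h2 : ∑ u, ∑ v, (margX p u * margY p v) * ε = ε := by
        simp only [← Finset.sum_mul]
        rw [hqsum, one_mul]
      linarith
    have hlogle : Real.log (1 + Q) ≤ ε := by
      have := Real.log_le_sub_one_of_pos (by linarith : (0:ℝ) < 1 + Q)
      linarith
    simp only [hF, hE, hSval]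
    linarith
  -- Conclusion
  have hbdd : BddAbove (Set.range F) := ⟨mutualInfo p, by rintro _ ⟨γ, rfl⟩; exact upper γ⟩
  refine le_antisymm ?_ (ciSup_le upper)
  refine le_of_forall_sub_le ?_
  intro ε hε
  obtain ⟨γ0, hγ0⟩ := lower ε hε
  exact hγ0.trans (le_ciSup hbdd γ0)
end
end
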